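/- Suppose the k-dimensional random vector Z satisfies Assumption (A), let τ ∈ (0,1), u ∈ S^{k−1}, and let (a_τ, b_τ) be the unique minimizer of Ψ_{τu}(a,b) := E[ρ_τ(u'Z − b'Γ_u'Z − a)]. Writing H^−_τ := {z ∈ ℝ^k : u'z < b_τ'Γ_u'z + a_τ} and H^+_τ := {z ∈ ℝ^k : u'z ≥ b_τ'Γ_u'z + a_τ}, one has Γ_u' [ (1/(1−τ)) E[Z·1_{Z ∈ H^+_τ}] − (1/τ) E[Z·1_{Z ∈ H^−_τ}] ] = 0; equivalently, the straight line through the two probability mass centers (1/τ)E[Z·1_{Z ∈ H^−_τ}] and (1/(1−τ))E[Z·1_{Z ∈ H^+_τ}] is parallel to u. -/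

import Mathlib

open MeasureTheory Matrix ENNReal Filter

/-- The quantile check function `ρ_τ`. -/
noncomputable def rho (τ x : ℝ) : ℝ := x * (τ - if x < 0 then 1 else 0)

/-- Assumption (A): absolutely continuous distribution with a density whose support is
connected, and finite first-order moments. -/
def AssumptionA {k : ℕ} (μ : Measure (Fin (k + 1) → ℝ)) : Prop :=
  IsProbabilityMeasure μ ∧
    (∃ f : (Fin (k + 1) → ℝ) → ℝ, Measurable f ∧ (∀ z, 0 ≤ f z) ∧
      μ = volume.withDensity (fun z => ENNReal.ofReal (f z)) ∧
      IsConnected (Function.support f)) ∧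
    Integrable (fun z : Fin (k + 1) → ℝ => z) μ

/-- The objective function `Ψ_{τu}(a, b) = E[ρ_τ(u'Z − b'Γ_u'Z − a)]`. -/
noncomputable def Psi {k : ℕ} (μ : Measure (Fin (k + 1) → ℝ)) (τ : ℝ)
    (u : Fin (k + 1) → ℝ) (Γ : Matrix (Fin (k + 1)) (Fin k) ℝ)
    (a : ℝ) (b : Fin k → ℝ) : ℝ :=
  ∫ z, rho τ (u ⬝ᵥ z - b ⬝ᵥ (Γᵀ *ᵥ z) - a) ∂μ

lemma rho_lipschitz {τ : ℝ} (h0 : 0 ≤ τ) (h1 : τ ≤ 1) (x y : ℝ) :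
    |rho τ x - rho τ y| ≤ |x - y| := by
  simp only [rho]
  split_ifs with hx hy hy <;> rw [abs_le] <;> constructor <;>
    rcases abs_cases (x - y) with ⟨h, h'⟩ | ⟨h, h'⟩ <;> nlinarith

lemma rho_abs_le {τ : ℝ} (h0 : 0 ≤ τ) (h1 : τ ≤ 1) (x : ℝ) : |rho τ x| ≤ |x| := by
  have := rho_lipschitz h0 h1 x 0
  simpa [rho] using this

lemma rho_shift {τ x d : ℝ} (hx : x ≠ 0) (hd : |d| < |x|) :
    rho τ (x + d) - rho τ x = d * (τ - if x < 0 then 1 else 0) := by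
  rcases lt_or_gt_of_ne hx with h | h
  · have h2 : x + d < 0 := by
      rcases abs_cases d with ⟨e, e'⟩ | ⟨e, e'⟩ <;> rcases abs_cases x with ⟨f, f'⟩ | ⟨f, f'⟩ <;> linarith
    simp only [rho, if_pos h, if_pos h2]; ring
  · have h2 : ¬ (x + d < 0) := by
      push_neg
      rcases abs_cases d with ⟨e, e'⟩ | ⟨e, e'⟩ <;> rcases abs_cases x with ⟨f, f'⟩ | ⟨f, f'⟩ <;> linarith
    simp only [rho, if_neg (not_lt.2 h.le), if_neg h2]; ring

lemma measurable_rho (τ : ℝ) : Measurable (rho τ) := by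
  unfold rho
  exact measurable_id.mul (measurable_const.sub
    (Measurable.ite (measurableSet_lt measurable_id measurable_const) measurable_const measurable_const))

lemma hyperplane_null {n : ℕ} (w : Fin n → ℝ) (u : Fin n → ℝ) (hwu : w ⬝ᵥ u = 1) (a : ℝ) :
    volume {z : Fin n → ℝ | w ⬝ᵥ z = a} = 0 := by
  set f : (Fin n → ℝ) →ₗ[ℝ] ℝ :=
    { toFun := fun z => w ⬝ᵥ z
      map_add' := fun x y => dotProduct_add w x y
      map_smul' := fun c x => by simp [dotProduct_smul] }
  have hker : LinearMap.ker f ≠ ⊤ := by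
    intro h
    have : f u = 0 := by rw [← LinearMap.mem_ker, h]; trivial
    simp only [f, LinearMap.coe_mk, AddHom.coe_mk] at this
    rw [hwu] at this; norm_num at this
  have hK : volume (LinearMap.ker f : Set (Fin n → ℝ)) = 0 :=
    MeasureTheory.Measure.addHaar_submodule volume _ hker
  have hset : {z : Fin n → ℝ | w ⬝ᵥ z = a} = (fun z => z + (-(a • u))) ⁻¹' (LinearMap.ker f) := by
    ext z
    simp only [Set.mem_setOf_eq, Set.mem_preimage, SetLike.mem_coe, LinearMap.mem_ker,
      map_add, map_neg]
    have hz : f z = w ⬝ᵥ z := rfl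
    have hu : f (a • u) = a := by
      rw [LinearMap.map_smul]
      have : f u = w ⬝ᵥ u := rfl
      rw [this, hwu]; simp
    rw [hz, hu]
    constructor <;> intro h <;> linarith
  rw [hset, measure_preimage_add_right]
  exact hK

theorem stmt4 {k : ℕ} (μ : Measure (Fin (k + 1) → ℝ))
    (hA : AssumptionA μ) (τ : ℝ) (hτ : τ ∈ Set.Ioo (0:ℝ) 1)
    (u : Fin (k + 1) → ℝ) (hu : ∑ i, u i ^ 2 = 1)
    (Γ : Matrix (Fin (k + 1)) (Fin k) ℝ) (hΓ : Γᵀ * Γ = 1) (hΓu : Γᵀ *ᵥ u = 0)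
    (a : ℝ) (b : Fin k → ℝ)
    (hmin : ∀ a' : ℝ, ∀ b' : Fin k → ℝ, Psi μ τ u Γ a b ≤ Psi μ τ u Γ a' b') :
    Γᵀ *ᵥ ((1 / (1 - τ)) •
        (∫ z, Set.indicator {z | b ⬝ᵥ (Γᵀ *ᵥ z) + a ≤ u ⬝ᵥ z} (fun z => z) z ∂μ) -
      (1 / τ) •
        (∫ z, Set.indicator {z | u ⬝ᵥ z < b ⬝ᵥ (Γᵀ *ᵥ z) + a} (fun z => z) z ∂μ)) = 0 := by
  obtain ⟨hprob, ⟨f, hf_meas, hf_nonneg, hμ_eq, hf_conn⟩, hint⟩ := hA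
  haveI := hprob
  obtain ⟨hτ0, hτ1⟩ := hτ
  have hτ1' : (0:ℝ) < 1 - τ := by linarith
  -- the normal vector
  set w : Fin (k+1) → ℝ := u - Γ *ᵥ b with hw
  have hdotb : ∀ z : Fin (k+1) → ℝ, b ⬝ᵥ (Γᵀ *ᵥ z) = (Γ *ᵥ b) ⬝ᵥ z := by
    intro z; rw [dotProduct_mulVec, vecMul_transpose]
  have hdot : ∀ z : Fin (k+1) → ℝ, u ⬝ᵥ z - b ⬝ᵥ (Γᵀ *ᵥ z) - a = w ⬝ᵥ z - a := by
    intro z; rw [hdotb z, hw, sub_dotProduct]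
  have hwu : w ⬝ᵥ u = 1 := by
    rw [hw, sub_dotProduct]
    have h1 : u ⬝ᵥ u = 1 := by
      rw [show u ⬝ᵥ u = ∑ i, u i * u i from rfl, ← hu]
      exact Finset.sum_congr rfl (fun i _ => (sq (u i)).symm)
    have h2 : (Γ *ᵥ b) ⬝ᵥ u = 0 := by
      rw [← vecMul_transpose, ← dotProduct_mulVec, hΓu, dotProduct_zero]
    rw [h1, h2]; ring
  -- integrability basics
  have hint_coord : ∀ i, Integrable (fun z : Fin (k+1) → ℝ => z i) μ := fun i =>
    (ContinuousLinearMap.proj (R := ℝ) (φ := fun _ : Fin (k+1) => ℝ) i).integrable_comp hint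
  have hint_dot : ∀ w' : Fin (k+1) → ℝ, Integrable (fun z => w' ⬝ᵥ z) μ := by
    intro w'
    simp only [dotProduct]
    exact integrable_finset_sum _ (fun i _ => ((hint_coord i).const_mul (w' i)))
  have hmeas_dot : ∀ w' : Fin (k+1) → ℝ, Measurable (fun z : Fin (k+1) → ℝ => w' ⬝ᵥ z - a) := by
    intro w'
    have hm : Measurable (fun z : Fin (k+1) → ℝ => w' ⬝ᵥ z) := by
      simp only [dotProduct]
      exact Finset.measurable_sum _ (fun i _ => by fun_prop)
    exact hm.sub measurable_const
  have hint_rho : ∀ w' : Fin (k+1) → ℝ, Integrable (fun z => rho τ (w' ⬝ᵥ z - a)) μ := by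
    intro w'
    refine Integrable.mono' ((hint_dot w').sub (integrable_const a)).abs
      ((measurable_rho τ).comp (hmeas_dot w')).aestronglyMeasurable ?_
    filter_upwards with z
    rw [Real.norm_eq_abs]
    exact rho_abs_le hτ0.le hτ1.le _
  -- null boundary
  have hac : μ ≪ volume := hμ_eq ▸ withDensity_absolutelyContinuous _ _
  have hae : ∀ᵐ z ∂μ, w ⬝ᵥ z - a ≠ 0 := by
    rw [ae_iff]
    simp only [ne_eq, not_not]
    apply hac
    have : {z : Fin (k+1) → ℝ | w ⬝ᵥ z - a = 0} = {z | w ⬝ᵥ z = a} := by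
      ext z; simp [sub_eq_zero]
    rw [this]
    exact hyperplane_null w u hwu a
  -- first order condition: inequality
  have foc_le : ∀ v : Fin k → ℝ,
      ∫ z, ((Γ *ᵥ v) ⬝ᵥ z) * (τ - if w ⬝ᵥ z - a < 0 then 1 else 0) ∂μ ≤ 0 := by
    intro v
    set q : Fin (k+1) → ℝ := Γ *ᵥ v with hq
    set h : (Fin (k+1) → ℝ) → ℝ := fun z => q ⬝ᵥ z with hh
    set φ : (Fin (k+1) → ℝ) → ℝ := fun z => -(h z * (τ - if w ⬝ᵥ z - a < 0 then 1 else 0)) with hφ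
    have harg : ∀ (c : ℝ) (z : Fin (k+1) → ℝ), (w - c • q) ⬝ᵥ z - a = (w ⬝ᵥ z - a) - c * h z := by
      intro c z
      rw [sub_dotProduct, smul_dotProduct]
      simp only [hh, smul_eq_mul]
      ring
    have hPsi_eq : ∀ c : ℝ, Psi μ τ u Γ a (b + c • v) = ∫ z, rho τ ((w - c • q) ⬝ᵥ z - a) ∂μ := by
      intro c
      unfold Psi
      congr 1; funext z
      congr 1
      rw [harg c z, add_dotProduct, smul_dotProduct]
      have : v ⬝ᵥ (Γᵀ *ᵥ z) = h z := by
        rw [hh, hq, dotProduct_mulVec, vecMul_transpose]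
      rw [this]
      have := hdot z
      simp only [smul_eq_mul]
      linarith [hdot z]
    have hPsi_b : Psi μ τ u Γ a b = ∫ z, rho τ (w ⬝ᵥ z - a) ∂μ := by
      unfold Psi; congr 1; funext z; rw [hdot z]
    set F : ℕ → (Fin (k+1) → ℝ) → ℝ := fun n z =>
      ((n:ℝ)+1) * (rho τ ((w - ((n:ℝ)+1)⁻¹ • q) ⬝ᵥ z - a) - rho τ (w ⬝ᵥ z - a)) with hF
    have hnpos : ∀ n : ℕ, (0:ℝ) < (n:ℝ)+1 := fun n => by positivity
    have hnonneg : ∀ n : ℕ, 0 ≤ ∫ z, F n z ∂μ := by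
      intro n
      have h1 := hmin a (b + ((n:ℝ)+1)⁻¹ • v)
      rw [hPsi_eq, hPsi_b] at h1
      have h3 : ∫ z, F n z ∂μ = ((n:ℝ)+1) *
          ((∫ z, rho τ ((w - ((n:ℝ)+1)⁻¹ • q) ⬝ᵥ z - a) ∂μ) - ∫ z, rho τ (w ⬝ᵥ z - a) ∂μ) := by
        rw [hF]
        rw [MeasureTheory.integral_const_mul]
        rw [integral_sub (hint_rho _) (hint_rho _)]
      rw [h3]
      exact mul_nonneg (hnpos n).le (by linarith)
    have hFmeas : ∀ n, AEStronglyMeasurable (F n) μ := by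
      intro n
      apply Measurable.aestronglyMeasurable
      exact (measurable_const.mul
        (((measurable_rho τ).comp (hmeas_dot _)).sub ((measurable_rho τ).comp (hmeas_dot w))))
    have hbound_int : Integrable (fun z => |h z|) μ := (hint_dot q).abs
    have hbound : ∀ n, ∀ᵐ z ∂μ, ‖F n z‖ ≤ |h z| := by
      intro n
      filter_upwards with z
      rw [hF, Real.norm_eq_abs, abs_mul, abs_of_pos (hnpos n)]
      have h1 : |rho τ ((w - ((n:ℝ)+1)⁻¹ • q) ⬝ᵥ z - a) - rho τ (w ⬝ᵥ z - a)| ≤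
          ((n:ℝ)+1)⁻¹ * |h z| := by
        have h2 := rho_lipschitz hτ0.le hτ1.le ((w - ((n:ℝ)+1)⁻¹ • q) ⬝ᵥ z - a) (w ⬝ᵥ z - a)
        have h3 : (w - ((n:ℝ)+1)⁻¹ • q) ⬝ᵥ z - a - (w ⬝ᵥ z - a) = -(((n:ℝ)+1)⁻¹ * h z) := by
          rw [harg]; ring
        rwa [h3, abs_neg, abs_mul, abs_of_pos (by positivity : (0:ℝ) < ((n:ℝ)+1)⁻¹)] at h2
      calc ((n:ℝ)+1) * |rho τ ((w - ((n:ℝ)+1)⁻¹ • q) ⬝ᵥ z - a) - rho τ (w ⬝ᵥ z - a)| ≤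
          ((n:ℝ)+1) * (((n:ℝ)+1)⁻¹ * |h z|) := by
            exact mul_le_mul_of_nonneg_left h1 (hnpos n).le
        _ = |h z| := by field_simp
    have hlim : ∀ᵐ z ∂μ, Tendsto (fun n => F n z) atTop (nhds (φ z)) := by
      filter_upwards [hae] with z hz
      have harg' : ∀ n : ℕ, (w - ((n:ℝ)+1)⁻¹ • q) ⬝ᵥ z - a
          = (w ⬝ᵥ z - a) + (-(((n:ℝ)+1)⁻¹ * h z)) := by
        intro n; rw [harg]; ring
      by_cases hh0 : h z = 0
      · have : ∀ n : ℕ, F n z = 0 := by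
          intro n; rw [hF]
          simp only [harg' n, hh0, mul_zero, neg_zero, add_zero, sub_self, mul_zero]
        have hφ0 : φ z = 0 := by rw [hφ]; simp [hh0]
        rw [hφ0]
        exact tendsto_const_nhds.congr (fun n => (this n).symm)
      · have habs : (0:ℝ) < |w ⬝ᵥ z - a| := abs_pos.2 hz
        have htend : Tendsto (fun n : ℕ => ((n:ℝ)+1)⁻¹ * |h z|) atTop (nhds 0) := by
          have := tendsto_one_div_add_atTop_nhds_zero_nat.mul_const |h z|
          simpa [one_div] using this
        have hev : ∀ᶠ n : ℕ in atTop, ((n:ℝ)+1)⁻¹ * |h z| < |w ⬝ᵥ z - a| :=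
          htend.eventually_lt_const habs
        have heq : ∀ᶠ n : ℕ in atTop, F n z = φ z := by
          filter_upwards [hev] with n hn
          have hd : |(-(((n:ℝ)+1)⁻¹ * h z))| < |w ⬝ᵥ z - a| := by
            rwa [abs_neg, abs_mul, abs_of_pos (by positivity : (0:ℝ) < ((n:ℝ)+1)⁻¹)]
          have hs := rho_shift (τ := τ) hz hd
          rw [hF]
          simp only [harg' n]
          rw [show rho τ (w ⬝ᵥ z - a + -(((n:ℝ)+1)⁻¹ * h z)) - rho τ (w ⬝ᵥ z - a)
            = -(((n:ℝ)+1)⁻¹ * h z) * (τ - if w ⬝ᵥ z - a < 0 then 1 else 0) from hs]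
          rw [hφ]
          have hne : ((n:ℝ)+1) ≠ 0 := (hnpos n).ne'
          field_simp
        exact tendsto_const_nhds.congr' (by filter_upwards [heq] with n hn; exact hn.symm)
    have hDCT := tendsto_integral_of_dominated_convergence (fun z => |h z|)
      hFmeas hbound_int hbound hlim
    have h0 : 0 ≤ ∫ z, φ z ∂μ := ge_of_tendsto hDCT (Eventually.of_forall hnonneg)
    have : ∫ z, φ z ∂μ = - ∫ z, h z * (τ - if w ⬝ᵥ z - a < 0 then 1 else 0) ∂μ := by
      rw [hφ, integral_neg]
    rw [this] at h0
    linarith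
  -- first order condition: equality
  have foc : ∀ v : Fin k → ℝ,
      ∫ z, ((Γ *ᵥ v) ⬝ᵥ z) * (τ - if w ⬝ᵥ z - a < 0 then 1 else 0) ∂μ = 0 := by
    intro v
    have h1 := foc_le v
    have h2 := foc_le (-v)
    simp only [Matrix.mulVec_neg, neg_dotProduct, neg_mul, integral_neg] at h2
    linarith
  -- final assembly
  have hSmM : MeasurableSet {z : Fin (k+1) → ℝ | w ⬝ᵥ z - a < 0} :=
    measurableSet_lt (hmeas_dot w) measurable_const
  have hSp : {z : Fin (k+1) → ℝ | b ⬝ᵥ (Γᵀ *ᵥ z) + a ≤ u ⬝ᵥ z}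
      = {z : Fin (k+1) → ℝ | w ⬝ᵥ z - a < 0}ᶜ := by
    ext z
    simp only [Set.mem_setOf_eq, Set.mem_compl_iff, not_lt]
    have := hdot z
    constructor <;> intro <;> linarith
  have hSm : {z : Fin (k+1) → ℝ | u ⬝ᵥ z < b ⬝ᵥ (Γᵀ *ᵥ z) + a}
      = {z : Fin (k+1) → ℝ | w ⬝ᵥ z - a < 0} := by
    ext z
    simp only [Set.mem_setOf_eq]
    have := hdot z
    constructor <;> intro <;> linarith
  have hSpM : MeasurableSet {z : Fin (k+1) → ℝ | b ⬝ᵥ (Γᵀ *ᵥ z) + a ≤ u ⬝ᵥ z} := by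
    rw [hSp]; exact hSmM.compl
  have hSmM' : MeasurableSet {z : Fin (k+1) → ℝ | u ⬝ᵥ z < b ⬝ᵥ (Γᵀ *ᵥ z) + a} := by
    rw [hSm]; exact hSmM
  -- component formula for vector integrals
  have hcomp : ∀ (S : Set (Fin (k+1) → ℝ)), MeasurableSet S → ∀ i,
      (∫ z, S.indicator (fun z => z) z ∂μ) i = ∫ z, S.indicator (fun z => z i) z ∂μ := by
    intro S hS i
    have h1 := (ContinuousLinearMap.proj (R := ℝ) (φ := fun _ : Fin (k+1) => ℝ) i).integral_comp_comm
      (hint.indicator hS)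
    have h2 : (∫ z, S.indicator (fun z => z) z ∂μ) i
        = ∫ x, (ContinuousLinearMap.proj (R := ℝ) (φ := fun _ : Fin (k+1) => ℝ) i)
            (S.indicator (fun z => z) x) ∂μ := h1.symm
    rw [h2]
    congr 1; funext z
    by_cases hz : z ∈ S <;>
      simp [Set.indicator_of_mem, Set.indicator_of_notMem, hz]
  -- sum formula
  funext j
  have hqz : ∀ z : Fin (k+1) → ℝ, (Γ *ᵥ Pi.single j 1) ⬝ᵥ z = (Γᵀ *ᵥ z) j := by
    intro z
    rw [mulVec_single]
    simp [dotProduct, Matrix.mulVec, Matrix.transpose_apply]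
  have hq_int : Integrable (fun z : Fin (k+1) → ℝ => (Γᵀ *ᵥ z) j) μ := by
    have := hint_dot (Γ *ᵥ Pi.single j 1)
    exact this.congr (Eventually.of_forall (fun z => hqz z))
  have hsum : ∀ (S : Set (Fin (k+1) → ℝ)), MeasurableSet S →
      ∑ i, Γ i j * (∫ z, S.indicator (fun z => z i) z ∂μ)
      = ∫ z, S.indicator (fun z => (Γᵀ *ᵥ z) j) z ∂μ := by
    intro S hS
    have step1 : ∀ i : Fin (k+1), Γ i j * (∫ z, S.indicator (fun z => z i) z ∂μ)
        = ∫ z, Γ i j * S.indicator (fun z => z i) z ∂μ :=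
      fun i => (MeasureTheory.integral_const_mul _ _).symm
    rw [Finset.sum_congr rfl (fun i _ => step1 i)]
    rw [← integral_finset_sum _ (fun i _ => ((hint_coord i).indicator hS).const_mul _)]
    congr 1; funext z
    by_cases hz : z ∈ S <;>
      simp [Set.indicator_of_mem, Set.indicator_of_notMem, hz, Matrix.mulVec, dotProduct,
        Matrix.transpose_apply]
  -- specialize FOC
  have hj := foc (Pi.single j 1)
  have hdecomp : ∀ z : Fin (k+1) → ℝ,
      ((Γ *ᵥ Pi.single j 1) ⬝ᵥ z) * (τ - if w ⬝ᵥ z - a < 0 then 1 else 0)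
      = τ * Set.indicator {z : Fin (k+1) → ℝ | b ⬝ᵥ (Γᵀ *ᵥ z) + a ≤ u ⬝ᵥ z} (fun z => (Γᵀ *ᵥ z) j) z
        - (1-τ) * Set.indicator {z : Fin (k+1) → ℝ | u ⬝ᵥ z < b ⬝ᵥ (Γᵀ *ᵥ z) + a} (fun z => (Γᵀ *ᵥ z) j) z := by
    intro z
    rw [hqz z]
    by_cases hz : w ⬝ᵥ z - a < 0
    · have hm : z ∈ {z : Fin (k+1) → ℝ | u ⬝ᵥ z < b ⬝ᵥ (Γᵀ *ᵥ z) + a} := by rw [hSm]; exact hz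
      have hp : z ∉ {z : Fin (k+1) → ℝ | b ⬝ᵥ (Γᵀ *ᵥ z) + a ≤ u ⬝ᵥ z} := by
        rw [hSp]; simpa using hz
      rw [if_pos hz, Set.indicator_of_mem hm, Set.indicator_of_notMem hp]; ring
    · have hm : z ∉ {z : Fin (k+1) → ℝ | u ⬝ᵥ z < b ⬝ᵥ (Γᵀ *ᵥ z) + a} := by
        rw [hSm]; simpa using hz
      have hp : z ∈ {z : Fin (k+1) → ℝ | b ⬝ᵥ (Γᵀ *ᵥ z) + a ≤ u ⬝ᵥ z} := by
        rw [hSp]; simpa using hz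
      rw [if_neg hz, Set.indicator_of_mem hp, Set.indicator_of_notMem hm]; ring
  rw [show (fun z => ((Γ *ᵥ Pi.single j 1) ⬝ᵥ z) * (τ - if w ⬝ᵥ z - a < 0 then 1 else 0))
    = fun z => τ * Set.indicator {z : Fin (k+1) → ℝ | b ⬝ᵥ (Γᵀ *ᵥ z) + a ≤ u ⬝ᵥ z} (fun z => (Γᵀ *ᵥ z) j) z
        - (1-τ) * Set.indicator {z : Fin (k+1) → ℝ | u ⬝ᵥ z < b ⬝ᵥ (Γᵀ *ᵥ z) + a} (fun z => (Γᵀ *ᵥ z) j) z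
    from funext hdecomp] at hj
  rw [integral_sub (((hq_int.indicator hSpM).const_mul τ)) (((hq_int.indicator hSmM').const_mul (1-τ))),
    MeasureTheory.integral_const_mul, MeasureTheory.integral_const_mul] at hj
  -- expand the goal
  set Ap := ∫ z, Set.indicator {z : Fin (k+1) → ℝ | b ⬝ᵥ (Γᵀ *ᵥ z) + a ≤ u ⬝ᵥ z} (fun z => (Γᵀ *ᵥ z) j) z ∂μ with hAp
  set Am := ∫ z, Set.indicator {z : Fin (k+1) → ℝ | u ⬝ᵥ z < b ⬝ᵥ (Γᵀ *ᵥ z) + a} (fun z => (Γᵀ *ᵥ z) j) z ∂μ with hAm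
  have key : τ * Ap - (1-τ) * Am = 0 := hj
  show (Γᵀ *ᵥ ((1 / (1 - τ)) •
        (∫ z, Set.indicator {z : Fin (k+1) → ℝ | b ⬝ᵥ (Γᵀ *ᵥ z) + a ≤ u ⬝ᵥ z} (fun z => z) z ∂μ) -
      (1 / τ) •
        (∫ z, Set.indicator {z : Fin (k+1) → ℝ | u ⬝ᵥ z < b ⬝ᵥ (Γᵀ *ᵥ z) + a} (fun z => z) z ∂μ))) j = (0:ℝ)
  have hmv : ∀ X : Fin (k+1) → ℝ, (Γᵀ *ᵥ X) j = ∑ i, Γ i j * X i := fun X => rfl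
  rw [hmv]
  simp only [Pi.sub_apply, Pi.smul_apply, smul_eq_mul]
  simp only [hcomp _ hSpM, hcomp _ hSmM']
  have e : ∀ i : Fin (k+1), Γ i j *
      ((1 / (1-τ)) * (∫ z, Set.indicator {z : Fin (k+1) → ℝ | b ⬝ᵥ (Γᵀ *ᵥ z) + a ≤ u ⬝ᵥ z} (fun z => z i) z ∂μ)
        - (1/τ) * (∫ z, Set.indicator {z : Fin (k+1) → ℝ | u ⬝ᵥ z < b ⬝ᵥ (Γᵀ *ᵥ z) + a} (fun z => z i) z ∂μ))
      = (1 / (1-τ)) * (Γ i j * (∫ z, Set.indicator {z : Fin (k+1) → ℝ | b ⬝ᵥ (Γᵀ *ᵥ z) + a ≤ u ⬝ᵥ z} (fun z => z i) z ∂μ))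
        - (1/τ) * (Γ i j * (∫ z, Set.indicator {z : Fin (k+1) → ℝ | u ⬝ᵥ z < b ⬝ᵥ (Γᵀ *ᵥ z) + a} (fun z => z i) z ∂μ)) := by
    intro i; ring
  rw [Finset.sum_congr rfl (fun i _ => e i), Finset.sum_sub_distrib, ← Finset.mul_sum,
    ← Finset.mul_sum, hsum _ hSpM, hsum _ hSmM', ← hAp, ← hAm]
  have hτne : τ ≠ 0 := hτ0.ne'
  have hτ1ne : (1:ℝ) - τ ≠ 0 := hτ1'.ne'
  field_simp
  linarith
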